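/- For nonnegative integers $m, j, a, b, d$ with $1 \le j \le m$, $a \le j$, and $b \le d$, one has $\binom{m-j+a+b}{a+b}\binom{a+b}{a} \le \binom{m+d}{d}\binom{m}{j}$. -/

import Mathlib

lemma aux_mono (x x' y y' : ℕ) (hx : x ≤ x') (hy : y ≤ y') :
    Nat.choose (x + y) y ≤ Nat.choose (x' + y') y' := by
  have h1 : Nat.choose (x + y) y ≤ Nat.choose (x' + y) y :=
    Nat.choose_le_choose y (by omega)
  have h2 : Nat.choose (x' + y) y ≤ Nat.choose (x' + y') y' := by
    clear h1
    induction hy with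
    | refl => exact le_refl _
    | @step k h ih =>
      calc Nat.choose (x' + y) y ≤ Nat.choose (x' + k) k := ih
        _ ≤ Nat.choose (x' + (k+1)) (k+1) := by
            rw [show x' + (k+1) = (x' + k) + 1 from rfl, Nat.choose_succ_succ]
            omega
  exact h1.trans h2
theorem stmt_4 (m j a b d : ℕ) (hj1 : 1 ≤ j) (hjm : j ≤ m) (haj : a ≤ j) (hbd : b ≤ d) :
    Nat.choose (m - j + a + b) (a + b) * Nat.choose (a + b) a
      ≤ Nat.choose (m + d) d * Nat.choose m j := by
  have hsym : Nat.choose (a + b) a = Nat.choose (a + b) b := by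
    rw [← Nat.choose_symm (Nat.le_add_right a b), Nat.add_sub_cancel_left]
  rw [hsym]
  have key := Nat.choose_mul (n := m - j + a + b) (k := a + b) (s := b)
    (by omega)
  rw [show m - j + a + b = m - j + b + a by ring] at key ⊢
  rw [key]
  have h1 : Nat.choose (m - j + b + a) b ≤ Nat.choose (m + d) d := by
    rw [show m - j + b + a = (m - j + a) + b by ring]
    exact aux_mono _ _ _ _ (by omega) hbd
  have h2 : Nat.choose (m - j + b + a - b) (a + b - b) ≤ Nat.choose m j := by
    rw [show m - j + b + a - b = (m - j) + a by omega, show a + b - b = a by omega]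
    have := aux_mono (m - j) (m - j) a j le_rfl haj
    rwa [show m - j + j = m by omega] at this
  exact Nat.mul_le_mul h1 h2
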